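/- arXiv:2309.11624 — 5 statements merged into one kernel-verified Lean document; each statement's English description precedes it below -/
import Mathlib

section
/- Let Q be a finite quiver that is not a cyclic quiver, and let a be an arrow of Q. Define Φ_a as the set of paths ω in Q such that a is a subpath of ω, and for every intermediate vertex i of ω (vertices t(ω^j) for 0 ≤ j < length(ω)-1), there is exactly one arrow of Q starting at i and exactly one arrow of Q ending at i. Then Φ_a has a unique element of maximal length. -/
namespace UMPPaper

variable {V A : Type}

/-- A (non-trivial) path in the quiver with source/target maps `s`, `t`,
represented as a nonempty list of composable arrows. -/
def IsPath (s t : A → V) (p : List A) : Prop :=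
  p ≠ [] ∧ p.Chain' (fun a b => t a = s b)

/-- `Q` is a cyclic quiver: there is a repetition-free path through all arrows
(and all vertices) whose target equals its source. -/
def IsCyclicQuiver (s t : A → V) : Prop :=
  ∃ p : List A, IsPath s t p ∧ p.Nodup ∧ (∀ a : A, a ∈ p) ∧
    (∀ v : V, ∃ a ∈ p, s a = v ∨ t a = v) ∧
    (∃ x ∈ p.getLast?, ∃ y ∈ p.head?, t x = s y)

/-- `Φ_a`: paths containing the arrow `a` as a subpath, all of whose
intermediate vertices have exactly one incoming and exactly one outgoing arrow. -/
def Phi (s t : A → V) (a : A) : Set (List A) :=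
  {p | IsPath s t p ∧ [a] <:+: p ∧
    ∀ x ∈ p.dropLast, (∃! b : A, s b = t x) ∧ (∃! b : A, t b = t x)}

/-- Specification of the assignment `a ↦ ω_a`. -/
def OmegaSpec (s t : A → V) (ω : A → List A) : Prop :=
  (IsCyclicQuiver s t → ∃ p : List A, IsPath s t p ∧ p.Nodup ∧ (∀ a : A, a ∈ p) ∧
      (∃ x ∈ p.getLast?, ∃ y ∈ p.head?, t x = s y) ∧ ∀ a : A, ω a = p) ∧
  (¬ IsCyclicQuiver s t →
    ∀ a : A, ω a ∈ Phi s t a ∧ ∀ q ∈ Phi s t a, q.length ≤ (ω a).length)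

/-- The quiver is connected (as an undirected graph on vertices). -/
def QConnected (s t : A → V) : Prop :=
  ∀ u v : V, Relation.ReflTransGen
    (fun x y => ∃ a : A, (s a = x ∧ t a = y) ∨ (s a = y ∧ t a = x)) u v

variable {V A : Type}

/-- duplicate decomposition -/
lemma dup_decomp {b : A} : ∀ {c : List A}, List.Sublist [b, b] c →
    ∃ x y z : List A, c = x ++ b :: (y ++ b :: z) := by
  intro c h
  induction c with
  | nil => simp at h
  | cons hd tl ih =>
    cases h with
    | cons _ h' =>
      obtain ⟨x, y, z, rfl⟩ := ih h'
      exact ⟨hd :: x, y, z, rfl⟩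
    | cons_cons _ h2 =>
      have hb : b ∈ tl := h2.subset (List.mem_singleton_self b)
      obtain ⟨y, z, rfl⟩ := List.append_of_mem hb
      exact ⟨[], y, z, rfl⟩

/-- predecessor lemma -/
lemma pred_mem {R : A → A → Prop} : ∀ (c : List A) (x : A), c.Chain' R → x ∈ c →
    c.head? = some x ∨ ∃ y ∈ c.dropLast, R y x := by
  intro c
  induction c with
  | nil => simp
  | cons hd tl ih =>
    intro x hch hx
    rcases List.mem_cons.1 hx with rfl | hx'
    · exact Or.inl rfl
    · have htl : tl ≠ [] := by rintro rfl; simp at hx'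
      have hdl : (hd :: tl).dropLast = hd :: tl.dropLast := by
        cases tl with
        | nil => exact absurd rfl htl
        | cons a l => simp [List.dropLast]
      rcases ih x ((List.isChain_cons.1 hch).2) hx' with h | ⟨y, hy, hr⟩
      · right
        refine ⟨hd, ?_, (List.isChain_cons.1 hch).1 x h⟩
        rw [hdl]; exact List.mem_cons_self
      · right
        exact ⟨y, by rw [hdl]; exact List.mem_cons_of_mem _ hy, hr⟩



def Good (s t : A → V) (v : V) : Prop := (∃! b : A, s b = v) ∧ (∃! b : A, t b = v)

def GoodCycle (s t : A → V) (c : List A) : Prop :=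
  c ≠ [] ∧ c.Chain' (fun a b => t a = s b) ∧ (∀ x ∈ c, Good s t (t x)) ∧
    (∃ x ∈ c.getLast?, ∃ y ∈ c.head?, t x = s y)


lemma goodCycle_of_chunk {s t : A → V} {x y z : List A} {b : A}
    (hch : (x ++ ((b :: y) ++ (b :: z))).Chain' (fun a b => t a = s b))
    (hgood : ∀ e ∈ b :: y, Good s t (t e)) : GoodCycle s t (b :: y) := by
  have hinf : ((b :: y) ++ [b]) <:+: (x ++ ((b :: y) ++ (b :: z))) :=
    ⟨x, z, by simp⟩
  have hch2 : ((b :: y) ++ [b]).Chain' (fun a b => t a = s b) := hch.infix hinf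
  obtain ⟨h1, h2, h3⟩ := List.isChain_append.1 hch2
  refine ⟨by simp, h1, hgood, ?_⟩
  have hw : (b :: y).getLast? = some ((b :: y).getLast (by simp)) :=
    List.getLast?_eq_getLast _
  exact ⟨_, hw, b, rfl, h3 _ hw b rfl⟩

lemma exists_nodup_goodCycle {s t : A → V} : ∀ (n : ℕ) (c : List A), c.length ≤ n → GoodCycle s t c →
    ∃ c', GoodCycle s t c' ∧ c'.Nodup := by
  intro n
  induction n with
  | zero => intro c hlen hc; exact ⟨c, hc, by simpa [List.length_eq_zero_iff.1 (Nat.le_zero.1 hlen)] using List.nodup_nil⟩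
  | succ n ih =>
    intro c hlen hc
    by_cases hnd : c.Nodup
    · exact ⟨c, hc, hnd⟩
    · obtain ⟨b, hb⟩ := List.exists_duplicate_iff_not_nodup.2 hnd
      obtain ⟨x, y, z, rfl⟩ := dup_decomp (List.duplicate_iff_sublist.1 hb)
      obtain ⟨_, hch, hgood, _⟩ := hc
      have hc' : GoodCycle s t (b :: y) :=
        goodCycle_of_chunk (by simpa using hch)
          (fun e he => hgood e (by simp [List.mem_append, List.mem_cons] at he ⊢; tauto))
      refine ih (b :: y) ?_ hc'
      have : (x ++ b :: (y ++ b :: z)).length = x.length + y.length + z.length + 2 := by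
        simp; omega
      simp only [List.length_cons]
      omega







lemma succ_mem {R : A → A → Prop} {c : List A} {x : A} (hch : c.Chain' R) (hx : x ∈ c) :
    c.getLast? = some x ∨ ∃ y ∈ c, R x y := by
  have hch' : (c.reverse).Chain' (flip R) := List.isChain_reverse.2 hch
  rcases pred_mem c.reverse x hch' (List.mem_reverse.2 hx) with h | ⟨y, hy, hr⟩
  · left; rwa [List.head?_reverse] at h
  · right
    exact ⟨y, List.mem_reverse.1 ((List.dropLast_sublist _).subset hy), hr⟩

lemma goodCycle_isCyclic {s t : A → V} (hconn : QConnected s t) {c : List A}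
    (hc : GoodCycle s t c) (hnd : c.Nodup) : IsCyclicQuiver s t := by
  obtain ⟨hne, hch, hgood, hclose⟩ := hc
  set S : V → Prop := fun v => ∃ x ∈ c, t x = v with hS
  have hout : ∀ v, S v → ∃ e ∈ c, s e = v := by
    rintro v ⟨x, hx, rfl⟩
    rcases succ_mem hch hx with hlast | ⟨y, hy, hr⟩
    · obtain ⟨x0, hx0, y0, hy0, hxy⟩ := hclose
      rw [hlast] at hx0
      cases Option.mem_some_iff.1 hx0
      exact ⟨y0, List.mem_of_mem_head? hy0, hxy.symm⟩
    · exact ⟨y, hy, hr.symm⟩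
  have hsrc : ∀ x ∈ c, S (s x) := by
    intro x hx
    rcases pred_mem c x hch hx with hhead | ⟨y, hy, hr⟩
    · obtain ⟨x0, hx0, y0, hy0, hxy⟩ := hclose
      rw [hhead] at hy0
      cases Option.mem_some_iff.1 hy0
      exact ⟨x0, List.mem_of_mem_getLast? hx0, hxy⟩
    · exact ⟨y, (List.dropLast_sublist _).subset hy, hr⟩
  have hstep : ∀ u v : V, (∃ e : A, (s e = u ∧ t e = v) ∨ (s e = v ∧ t e = u)) →
      S u → S v := by
    rintro u v ⟨e, he⟩ hu
    obtain ⟨x, hx, hxv⟩ := hu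
    rcases he with ⟨he1, he2⟩ | ⟨he1, he2⟩
    · obtain ⟨e', he', hse'⟩ := hout u ⟨x, hx, hxv⟩
      obtain ⟨⟨b, hb, hub⟩, -⟩ := hgood x hx
      have hee : e = e' :=
        (hub e (show s e = t x by rw [he1, ← hxv])).trans (hub e' (show s e' = t x by rw [hse', ← hxv])).symm
      exact ⟨e', he', by rw [← hee, he2]⟩
    · obtain ⟨-, ⟨b, hb, hub⟩⟩ := hgood x hx
      have hee : e = x := (hub e (show t e = t x by rw [he2, ← hxv])).trans (hub x rfl).symm
      rw [← he1, hee]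
      exact hsrc x hx
  have hall : ∀ v, S v := by
    obtain ⟨x0, hx0⟩ := List.exists_mem_of_ne_nil c hne
    intro v
    have h0 : S (t x0) := ⟨x0, hx0, rfl⟩
    have hrt := hconn (t x0) v
    induction hrt with
    | refl => exact h0
    | tail _ h2 ih => exact hstep _ _ h2 ih
  have harr : ∀ e : A, e ∈ c := by
    intro e
    obtain ⟨x, hx, hxv⟩ := hall (s e)
    obtain ⟨⟨b, hb, hub⟩, -⟩ := hgood x hx
    obtain ⟨e', he', hse'⟩ := hout (s e) ⟨x, hx, hxv⟩
    have hee : e = e' := (hub e hxv.symm).trans (hub e' (show s e' = t x by rw [hse', ← hxv])).symm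
    rw [hee]; exact he'
  refine ⟨c, ⟨hne, hch⟩, hnd, harr, ?_, hclose⟩
  intro v
  obtain ⟨x, hx, hxv⟩ := hall v
  exact ⟨x, hx, Or.inr hxv⟩


lemma phi_nodup {s t : A → V} (hconn : QConnected s t) (hnc : ¬ IsCyclicQuiver s t)
    {a : A} {p : List A} (hp : p ∈ Phi s t a) : p.Nodup := by
  by_contra hnd
  obtain ⟨b, hb⟩ := List.exists_duplicate_iff_not_nodup.2 hnd
  obtain ⟨⟨-, hch⟩, -, hmid⟩ := hp
  obtain ⟨x, y, z, rfl⟩ := dup_decomp (List.duplicate_iff_sublist.1 hb)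
  apply hnc
  have hsub : ∀ e ∈ b :: y, e ∈ (x ++ b :: (y ++ b :: z)).dropLast := by
    intro e he
    have : x ++ b :: (y ++ b :: z) = (x ++ b :: y) ++ b :: z := by simp
    rw [this, List.dropLast_append_cons]
    exact List.mem_append_left _ (List.mem_append_right _ he)
  have hgc : GoodCycle s t (b :: y) :=
    goodCycle_of_chunk (by simpa using hch) (fun e he => hmid e (hsub e he))
  obtain ⟨c', hc', hnd'⟩ := exists_nodup_goodCycle (b :: y).length _ le_rfl hgc
  exact goodCycle_isCyclic hconn hc' hnd'

/-- determinism of chains with unique successors -/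
lemma det_chain {R : A → A → Prop} : ∀ (c c' : List A), c.length = c'.length →
    c.Chain' R → c'.Chain' R → c.head? = c'.head? →
    (∀ x ∈ c.dropLast, ∃! b : A, R x b) → c = c' := by
  intro c
  induction c with
  | nil => intro c' hl _ _ _ _; simpa using (List.length_eq_zero_iff.1 hl.symm)
  | cons x cc ih =>
    intro c' hl hch hch' hh hu
    cases c' with
    | nil => simp at hl
    | cons x' cc' =>
      have hx : x = x' := by simpa using hh
      subst hx
      cases cc with
      | nil =>
        cases cc' with
        | nil => rfl
        | cons _ _ => simp at hl
      | cons y c2 =>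
        cases cc' with
        | nil => simp at hl
        | cons y' c2' =>
          have hxm : x ∈ (x :: y :: c2).dropLast := by simp
          obtain ⟨b, hb, hub⟩ := hu x hxm
          have hy : y = y' := by
            have h1 : R x y := (List.isChain_cons_cons.1 hch).1
            have h2 : R x y' := (List.isChain_cons_cons.1 hch').1
            exact (hub y h1).trans (hub y' h2).symm
          subst hy
          have := ih (y :: c2') (by simpa using hl)
            (List.isChain_cons_cons.1 hch).2 (List.isChain_cons_cons.1 hch').2 rfl
            (fun e he => hu e (by simp at he ⊢; tauto))
          rw [this]
lemma phi_mix {s t : A → V} {a : A} {u v u' v' : List A}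
    (hw : u ++ a :: v ∈ Phi s t a) (hw' : u' ++ a :: v' ∈ Phi s t a) :
    u' ++ a :: v ∈ Phi s t a := by
  obtain ⟨⟨-, hch⟩, -, hmid⟩ := hw
  obtain ⟨⟨-, hch'⟩, -, hmid'⟩ := hw'
  obtain ⟨hchu, hchav, hlink⟩ := List.isChain_append.1 hch
  obtain ⟨hchu', hchav', hlink'⟩ := List.isChain_append.1 hch'
  refine ⟨⟨by simp, ?_⟩, ⟨u', v, by simp⟩, ?_⟩
  · refine List.isChain_append.2 ⟨hchu', hchav, ?_⟩
    intro p hp q hq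
    simp only [List.head?_cons, Option.mem_some_iff] at hq
    subst hq
    exact hlink' p hp a (by simp)
  · intro x hx
    rw [List.dropLast_append_cons] at hx
    rcases List.mem_append.1 hx with hx | hx
    · exact hmid' x (by rw [List.dropLast_append_cons]; exact List.mem_append_left _ hx)
    · exact hmid x (by rw [List.dropLast_append_cons]; exact List.mem_append_right _ hx)

lemma phi_max_unique {s t : A → V} (hconn : QConnected s t) (hnc : ¬ IsCyclicQuiver s t)
    {a : A} {w w' : List A} (hw : w ∈ Phi s t a) (hw' : w' ∈ Phi s t a)
    (hmax : ∀ p ∈ Phi s t a, p.length ≤ w.length)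
    (hmax' : ∀ p ∈ Phi s t a, p.length ≤ w'.length) : w' = w := by
  obtain ⟨u, v, huv⟩ := hw.2.1
  obtain ⟨u', v', huv'⟩ := hw'.2.1
  have e : w = u ++ a :: v := by simpa using huv.symm
  have e' : w' = u' ++ a :: v' := by simpa using huv'.symm
  subst e; subst e'
  have hnd : (u ++ a :: v).Nodup := phi_nodup hconn hnc hw
  have m1 : u' ++ a :: v ∈ Phi s t a := phi_mix hw hw'
  have m2 : u ++ a :: v' ∈ Phi s t a := phi_mix hw' hw
  have l1 := hmax _ m1
  have l2 := hmax' _ m1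
  have l3 := hmax _ m2
  have l4 := hmax' _ m2
  simp only [List.length_append, List.length_cons] at l1 l2 l3 l4
  have hu_len : u.length = u'.length := by omega
  have hv_len : v.length = v'.length := by omega
  obtain ⟨⟨-, hch⟩, -, hmid⟩ := hw
  obtain ⟨⟨-, hch'⟩, -, hmid'⟩ := hw'
  obtain ⟨hchu, hchav, hlink⟩ := List.isChain_append.1 hch
  obtain ⟨hchu', hchav', hlink'⟩ := List.isChain_append.1 hch'
  -- forward determinism : v = v'
  have hveq : a :: v = a :: v' := by
    refine det_chain (R := fun x b => t x = s b) _ _ (by simp [hv_len]) hchav hchav' rfl ?_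
    intro x hx
    have hxw : x ∈ (u ++ a :: v).dropLast := by
      rw [List.dropLast_append_cons]; exact List.mem_append_right _ hx
    obtain ⟨⟨b, hb, hub⟩, -⟩ := hmid x hxw
    exact ⟨b, hb.symm, fun y hy => hub y hy.symm⟩
  have hv : v = v' := by injection hveq
  -- backward determinism : u = u'
  have hu : u = u' := by
    rcases eq_or_ne u [] with rfl | hu0
    · have : u'.length = 0 := by simpa using hu_len.symm
      exact (List.length_eq_zero_iff.1 this).symm
    · have hu0' : u' ≠ [] := by
        intro h; rw [h] at hu_len; simp [List.length_eq_zero_iff] at hu_len; exact hu0 hu_len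
      have hca : (u ++ [a]).Chain' (fun a b => t a = s b) := hch.infix ⟨[], v, by simp⟩
      have hca' : (u' ++ [a]).Chain' (fun a b => t a = s b) := hch'.infix ⟨[], v', by simp⟩
      have hrev : (a :: u.reverse).Chain' (fun x b => s x = t b) := by
        have h2 : (u ++ [a]).Chain' (flip (fun x b : A => s x = t b)) :=
          hca.imp (fun _ _ h => h.symm)
        have := List.isChain_reverse.2 h2
        simpa [List.Chain', flip] using this
      have hrev' : (a :: u'.reverse).Chain' (fun x b => s x = t b) := by
        have h2 : (u' ++ [a]).Chain' (flip (fun x b : A => s x = t b)) :=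
          hca'.imp (fun _ _ h => h.symm)
        have := List.isChain_reverse.2 h2
        simpa [List.Chain', flip] using this
      have hdet : a :: u.reverse = a :: u'.reverse := by
        refine det_chain (R := fun x b => s x = t b) _ _ (by simp [hu_len]) hrev hrev' rfl ?_
        intro x hx
        -- identify where x lives
        obtain ⟨h0, utail, hu_eq⟩ : ∃ h0 utail, u = h0 :: utail := by
          cases u with
          | nil => exact absurd rfl hu0
          | cons h0 utail => exact ⟨h0, utail, rfl⟩
        have hx' : x = a ∨ x ∈ utail := by
          rw [hu_eq] at hx
          simpa [List.dropLast, List.reverse_cons, List.dropLast_concat] using hx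
        have hxw : x ∈ u ++ a :: v := by
          rcases hx' with rfl | h
          · exact List.mem_append_right _ (by simp)
          · exact List.mem_append_left _ (by rw [hu_eq]; exact List.mem_cons_of_mem _ h)
        rcases pred_mem _ x hch hxw with hhead | ⟨y, hy, hr⟩
        · exfalso
          rw [hu_eq] at hhead
          simp only [List.cons_append, List.head?_cons, Option.some.injEq] at hhead
          obtain ⟨hndu, -, hdisj⟩ := List.nodup_append.1 hnd
          rcases hx' with rfl | h
          · exact hdisj x (by rw [hu_eq, hhead]; exact List.mem_cons_self)
              x (List.mem_cons_self) rfl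
          · rw [hu_eq, List.nodup_cons] at hndu
            exact hndu.1 (by rw [hhead]; exact h)
        · obtain ⟨-, b, hb, hub⟩ := hmid y hy
          exact ⟨b, ((hb.trans hr)).symm, fun y0 hy0 => hub y0 (hy0.symm.trans hr.symm)⟩
      have : u.reverse = u'.reverse := by injection hdet
      exact List.reverse_injective this
  rw [hu, hv]

/-- Let `Q` be a finite (connected) quiver that is not a cyclic quiver and
`a` an arrow of `Q`. Then `Φ_a` has a unique element of maximal length. -/
theorem stmt_0 [Fintype V] [Fintype A] (s t : A → V)
    (hconn : QConnected s t) (hnc : ¬ IsCyclicQuiver s t) (a : A) :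
    ∃ w ∈ Phi s t a, (∀ p ∈ Phi s t a, p.length ≤ w.length) ∧
      ∀ w' ∈ Phi s t a, (∀ p ∈ Phi s t a, p.length ≤ w'.length) → w' = w := by
  classical
  have hmem : [a] ∈ Phi s t a := ⟨⟨by simp, List.isChain_singleton _⟩, List.infix_refl _, by simp⟩
  have hbdd : ∀ p ∈ Phi s t a, p.length ≤ Fintype.card A :=
    fun p hp => (phi_nodup hconn hnc hp).length_le_card
  set P : ℕ → Prop := fun n => ∃ p ∈ Phi s t a, p.length = n with hP
  have h1 : P 1 := ⟨[a], hmem, rfl⟩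
  have hcard : 1 ≤ Fintype.card A := Fintype.card_pos_iff.2 ⟨a⟩
  have hfg : P (Nat.findGreatest P (Fintype.card A)) :=
    Nat.findGreatest_spec hcard h1
  obtain ⟨w, hw, hwlen⟩ := hfg
  have hmax : ∀ p ∈ Phi s t a, p.length ≤ w.length := by
    intro p hp
    rw [hwlen]
    exact Nat.le_findGreatest (hbdd p hp) ⟨p, hp, rfl⟩
  exact ⟨w, hw, hmax, fun w' hw' hmax' => phi_max_unique hconn hnc hw hw' hmax hmax'⟩

end UMPPaper
end

section
/- Let Q be a finite quiver that is not a cyclic quiver, and let a be an arrow of Q. Then the path ω_a (the path of maximal length in Φ_a) is repetition-free, i.e., no arrow occurs twice as a factor of ω_a. -/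
namespace UMPPaper

variable {V A : Type}

private lemma sublist_pair_decomp {b : A} {w : List A}
    (h : List.Sublist [b, b] w) : ∃ u v r, w = u ++ b :: v ++ b :: r := by
  induction w with
  | nil => simp at h
  | cons x w ih =>
    cases h with
    | cons _ h' =>
      obtain ⟨u, v, r, hw⟩ := ih h'
      exact ⟨x :: u, v, r, by simp [hw]⟩
    | cons_cons _ h' =>
      have hb : b ∈ w := h'.subset (by simp)
      obtain ⟨v, r, hw⟩ := List.append_of_mem hb
      exact ⟨[], v, r, by simp [hw]⟩

/-- for a finite (connected) non-cyclic quiver, the path `ω_a`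
(a path of maximal length in `Φ_a`) is repetition-free. -/
theorem stmt_1 [Fintype V] [Fintype A] (s t : A → V)
    (hconn : QConnected s t) (hnc : ¬ IsCyclicQuiver s t) (a : A)
    (w : List A) (hw : w ∈ Phi s t a)
    (hmax : ∀ p ∈ Phi s t a, p.length ≤ w.length) :
    w.Nodup := by
  by_contra hnd
  obtain ⟨b, hb⟩ := List.exists_duplicate_iff_not_nodup.mpr hnd
  have hsub : List.Sublist [b, b] w := List.duplicate_iff_sublist.mp hb
  obtain ⟨u, v, r, hdec⟩ := sublist_pair_decomp hsub
  obtain ⟨⟨hne, hchain⟩, hinf, hmid⟩ := hw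
  set c : List A := b :: v with hc
  set d : List A := b :: r with hd
  have hwud : w = u ++ (c ++ d) := by simp [hdec, hc, hd]
  -- the pumped path
  set w' : List A := u ++ (c ++ (c ++ d)) with hw'
  have hchain' : w'.Chain' (fun a b => t a = s b) := by
    simp only [List.Chain'] at hchain ⊢
    rw [hwud, List.isChain_append] at hchain
    obtain ⟨hu, hcd, hlink⟩ := hchain
    have hcd' := hcd
    rw [List.isChain_append] at hcd'
    obtain ⟨hcc, hdd, hlink2⟩ := hcd'
    rw [hw', List.isChain_append]
    refine ⟨hu, ?_, ?_⟩
    · rw [List.isChain_append]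
      refine ⟨hcc, hcd, ?_⟩
      intro x hx y hy
      have heq : b = y := by simpa [hc, hd] using hy
      subst heq
      exact hlink2 x hx b (by simp [hd])
    · intro x hx y hy
      have heq : b = y := by simpa [hc, hd] using hy
      subst heq
      exact hlink x hx b (by simp [hc, hd])
  have hmem : a ∈ w' := by
    have ha : a ∈ w := hinf.subset (by simp)
    rw [hwud] at ha
    rw [hw']
    simp only [List.mem_append] at ha ⊢
    tauto
  have hinf' : [a] <:+: w' := by
    obtain ⟨p, q, hpq⟩ := List.append_of_mem hmem
    exact ⟨p, q, by simp [hpq]⟩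
  have hdrop : ∀ x ∈ w'.dropLast, x ∈ w.dropLast := by
    intro x hx
    have hdne : d ≠ [] := by simp [hd]
    rw [hwud, ← List.append_assoc, List.dropLast_append_of_ne_nil hdne]
    rw [hw', ← List.append_assoc, ← List.append_assoc,
      List.dropLast_append_of_ne_nil hdne] at hx
    simp only [List.mem_append] at hx ⊢
    rcases hx with ((h1 | h2) | h3) | h4
    · tauto
    · tauto
    · left; right; exact h3
    · tauto
  have hw'Phi : w' ∈ Phi s t a := by
    refine ⟨⟨by simp [hw', hc], hchain'⟩, hinf', fun x hx => hmid x (hdrop x hx)⟩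
  have hlen := hmax w' hw'Phi
  rw [hw', hwud] at hlen
  simp only [List.length_append] at hlen
  have : c.length = 0 := by omega
  simp [hc] at this


end UMPPaper
end

section
/- Let A = kQ/I be a bound quiver algebra and u a non-trivial path in Q such that no path of the form ω_a^{l_a} ω_b^0 lying in I divides u (where ω_a^{l_a} denotes the last arrow of ω_a and ω_b^0 the first arrow of ω_b). Then u is a path of Q_N for exactly one weakly connected component N of the ramifications graph G_{Q,I}. -/
namespace UMPPaper

variable {V A : Type}

/-! ## Bound quiver algebras: the ideal `I` is abstracted by the set `Zi` of paths lying in it. -/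

/-- The set of paths lying in a (two-sided) ideal is closed under taking super-paths. -/
def ZeroClosed (Zi : List A → Prop) : Prop :=
  ∀ p q : List A, Zi p → p <:+: q → Zi q

/-- Path-level content of admissibility: `I ⊆ R², Rᵐ ⊆ I` for some `m ≥ 2`. -/
def Admissible (s t : A → V) (Zi : List A → Prop) : Prop :=
  (∀ p : List A, Zi p → 2 ≤ p.length) ∧
  ∃ m : ℕ, 2 ≤ m ∧ ∀ p : List A, IsPath s t p → m ≤ p.length → Zi p

/-- `t(p) = s(q)` and the junction (last arrow of `p`)·(first arrow of `q`) is not in `I`. -/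
def JunctionOK (s t : A → V) (Zi : List A → Prop) (p q : List A) : Prop :=
  ∃ x ∈ p.getLast?, ∃ y ∈ q.head?, t x = s y ∧ ¬ Zi [x, y]

/-- Directed edge of the ramifications graph, on path-vertices. -/
def REdgeP (s t : A → V) (Zi : List A → Prop) (p q : List A) : Prop :=
  p ≠ q ∧ JunctionOK s t Zi p q

/-- Directed edge `ω_a → ω_b` of the ramifications graph `G_{Q,I}`. -/
def REdge (s t : A → V) (Zi : List A → Prop) (ω : A → List A) (a b : A) : Prop :=
  REdgeP s t Zi (ω a) (ω b)

/-- Undirected adjacency (including equality of vertices) used for weak connectivity. -/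
def RAdj (s t : A → V) (Zi : List A → Prop) (ω : A → List A) (a b : A) : Prop :=
  ω a = ω b ∨ REdge s t Zi ω a b ∨ REdge s t Zi ω b a

/-- `a` and `b` lie in the same weakly connected component of `G_{Q,I}`. -/
def SameComp (s t : A → V) (Zi : List A → Prop) (ω : A → List A) (a b : A) : Prop :=
  Relation.ReflTransGen (RAdj s t Zi ω) a b

/-- `N` (a set of arrows) is (the arrow set `(Q_N)₁` of) a weakly connected
component of the ramifications graph `G_{Q,I}`. -/
def IsComp (s t : A → V) (Zi : List A → Prop) (ω : A → List A) (N : Set A) : Prop :=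
  ∃ a : A, N = {b | SameComp s t Zi ω a b}

/-- A path of the subquiver `Q_N`. -/
def PathIn (s t : A → V) (N : Set A) (p : List A) : Prop :=
  IsPath s t p ∧ ∀ x ∈ p, x ∈ N

/-- `m` is (a representative of) a maximal path of `A_N = kQ_N/I_N`
(for `N = Set.univ` this is a maximal path of `A = kQ/I`). -/
def MaxPathIn (s t : A → V) (Zi : List A → Prop) (N : Set A) (m : List A) : Prop :=
  PathIn s t N m ∧ ¬ Zi m ∧
  (∀ α ∈ N, (∃ x ∈ m.getLast?, t x = s α) → Zi (m ++ [α])) ∧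
  (∀ α ∈ N, (∃ x ∈ m.head?, t α = s x) → Zi (α :: m))

/-- `A_N` is a UMP algebra: any two non-disjoint maximal paths coincide. -/
def UMPin (s t : A → V) (Zi : List A → Prop) (N : Set A) : Prop :=
  ∀ m m' : List A, MaxPathIn s t Zi N m → MaxPathIn s t Zi N m' →
    (∃ a, a ∈ m ∧ a ∈ m') → m = m'

/-- `A = kQ/I` is special multiserial: every arrow has at most one right and at
most one left arrow-extension outside `I`. -/
def SpecialMultiserial (s t : A → V) (Zi : List A → Prop) : Prop :=
  ∀ α β γ : A,
    ((t α = s β ∧ ¬ Zi [α, β]) → (t α = s γ ∧ ¬ Zi [α, γ]) → β = γ) ∧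
    ((t β = s α ∧ ¬ Zi [β, α]) → (t γ = s α ∧ ¬ Zi [γ, α]) → β = γ)

/-- `ws = [ω_0, …, ω_n]` is the enumeration of the vertices of the component `N`
in edge order; `ω(N) = ws.flatten`. -/
def CompEnum (s t : A → V) (Zi : List A → Prop) (ω : A → List A)
    (N : Set A) (ws : List (List A)) : Prop :=
  ws ≠ [] ∧ ws.Nodup ∧ (∀ p, p ∈ ws ↔ ∃ a ∈ N, ω a = p) ∧
  ws.Chain' (fun p q => JunctionOK s t Zi p q) ∧ IsPath s t ws.flatten

/-- `W^{(l)}`, the `l`-fold concatenation of `W`. -/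
def cyclePow (W : List A) (l : ℕ) : List A := (List.replicate l W).flatten

/-- `R` is a minimal set of zero relations generating `I_N` (so `A_N` is monomial). -/
def MinGen (s t : A → V) (Zi : List A → Prop) (N : Set A) (R : Set (List A)) : Prop :=
  (∀ r ∈ R, PathIn s t N r ∧ Zi r) ∧
  (∀ p, PathIn s t N p → (Zi p ↔ ∃ r ∈ R, r <:+: p)) ∧
  (∀ r ∈ R, ∀ r' ∈ R, r <:+: r' → r = r')

/-- `r` is a quadratic junction relation `ω_a^{l_a} ω_b^0` with `a, b ∈ (Q_N)₁`. -/
def IsJuncRel (ω : A → List A) (N : Set A) (r : List A) : Prop :=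
  ∃ a ∈ N, ∃ b ∈ N, ∃ x ∈ (ω a).getLast?, ∃ y ∈ (ω b).head?, r = [x, y]

/-- `S_N = R_N \ Ω_N`. -/
def SRel (ω : A → List A) (N : Set A) (R : Set (List A)) : Set (List A) :=
  {r ∈ R | ¬ IsJuncRel ω N r}

/-- The order `≤_f` on arrows given by position along `W = ω(N)`. -/
def leF (W : List A) (α β : A) : Prop :=
  ∃ u u' : List A, W = u ++ α :: u' ∧ β ∈ α :: u'

/-- The order `≤_s` on relations: comparison of first arrows. -/
def leS (W : List A) (u v : List A) : Prop :=
  ∃ x ∈ u.head?, ∃ y ∈ v.head?, leF W x y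

/-- `ss = [s_1, …, s_k]` enumerates `S` in strictly increasing `≤_s` order. -/
def SEnum (W : List A) (S : Set (List A)) (ss : List (List A)) : Prop :=
  ss.Nodup ∧ (∀ r, r ∈ ss ↔ r ∈ S) ∧ ss.Chain' (fun u v => leS W u v ∧ u ≠ v)

/-- `m` is one of the paths `m_i`, `0 ≤ i ≤ k`, of the definition of `S_N^*`.
Note that `ω_n^{l_n} ω_0^0 ∈ I_N` is expressed by `¬ JunctionOK s t Zi W W`. -/
def IsMi (s t : A → V) (Zi : List A → Prop) (W : List A)
    (ss : List (List A)) (m : List A) : Prop :=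
  -- case `0 < i < k`
  (∃ p ∈ ss.zip ss.tail, ∃ u v v' : List A, ∃ x ∈ p.1.head?, ∃ y ∈ p.2.head?,
      W = u ++ [x] ++ v ++ [y] ++ v' ∧ m = v ++ p.2.dropLast) ∨
  -- case `i = 0`, `ω_n^{l_n} ω_0^0 ∈ I_N`
  (¬ JunctionOK s t Zi W W ∧
    ∃ s1 ∈ ss.head?, ∃ u z : List A, W = u ++ s1 ++ z ∧ m = u ++ s1.dropLast) ∨
  -- case `i = k`, `ω_n^{l_n} ω_0^0 ∈ I_N`
  (¬ JunctionOK s t Zi W W ∧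
    ∃ sk ∈ ss.getLast?, ∃ v z : List A, W = z ++ sk ++ v ∧ m = sk.tail ++ v) ∨
  -- case `i ∈ {0, k}`, `ω_n^{l_n} ω_0^0 ∉ I_N`
  (JunctionOK s t Zi W W ∧
    ∃ s1 ∈ ss.head?, ∃ sk ∈ ss.getLast?, ∃ u v z z' : List A,
      ∃ x ∈ s1.head?, ∃ y ∈ sk.head?,
      W = u ++ [x] ++ z ∧ W = z' ++ [y] ++ v ∧ m = v ++ u ++ s1.dropLast)

/-- `r` is an `ω`-relation: a zero relation of length greater than two which is the
unique element of `I` dividing it. -/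
def IsOmegaRel (s t : A → V) (Zi : List A → Prop) (r : List A) : Prop :=
  IsPath s t r ∧ Zi r ∧ 3 ≤ r.length ∧ ∀ r' : List A, Zi r' → r' <:+: r → r' = r


section Stmt5Helpers

theorem mem_of_single_infix {a : A} {l : List A} (h : [a] <:+: l) : a ∈ l :=
  List.singleton_sublist.1 h.sublist

theorem single_infix_of_mem {a : A} {l : List A} (h : a ∈ l) : [a] <:+: l := by
  obtain ⟨u, v, rfl⟩ := List.append_of_mem h
  exact ⟨u, v, by simp⟩

theorem prefix_agree (s t : A → V) :
    ∀ (p2 : List A) (c : A) (p1 q1 q2 : List A),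
      (p1 ++ c :: p2).Chain' (fun a b => t a = s b) →
      (q1 ++ c :: q2).Chain' (fun a b => t a = s b) →
      (∀ x ∈ (p1 ++ c :: p2).dropLast, ∃! b : A, s b = t x) →
      (∀ x ∈ (q1 ++ c :: q2).dropLast, ∃! b : A, s b = t x) →
      p2 <+: q2 ∨ q2 <+: p2 := by
  intro p2
  induction p2 with
  | nil => intro _ _ _ q2 _ _ _ _; exact Or.inl ⟨q2, rfl⟩
  | cons d p2' ih =>
    intro c p1 q1 q2 hp hq hup huq
    cases q2 with
    | nil => exact Or.inr ⟨d :: p2', rfl⟩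
    | cons e q2' =>
      have hcd : t c = s d := (List.isChain_cons_cons.1 (List.isChain_append.1 hp).2.1).1
      have hce : t c = s e := (List.isChain_cons_cons.1 (List.isChain_append.1 hq).2.1).1
      have hc : c ∈ (p1 ++ c :: d :: p2').dropLast := by
        rw [List.dropLast_append_of_ne_nil (by simp)]
        simp
      obtain ⟨b0, -, hb0⟩ := hup c hc
      have hde : d = e := by rw [hb0 d hcd.symm, hb0 e hce.symm]
      subst hde
      have h := ih d (p1 ++ [c]) (q1 ++ [c]) q2'
        (by simpa using hp) (by simpa using hq)
        (by simpa using hup) (by simpa using huq)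
      rcases h with h | h
      · exact Or.inl (List.cons_prefix_cons.2 ⟨rfl, h⟩)
      · exact Or.inr (List.cons_prefix_cons.2 ⟨rfl, h⟩)

theorem suffix_agree (s t : A → V) :
    ∀ (p1 : List A) (c : A) (p2 q1 q2 : List A),
      (p1 ++ c :: p2).Chain' (fun a b => t a = s b) →
      (q1 ++ c :: q2).Chain' (fun a b => t a = s b) →
      (∀ x ∈ (p1 ++ c :: p2).dropLast, ∃! b : A, t b = t x) →
      (∀ x ∈ (q1 ++ c :: q2).dropLast, ∃! b : A, t b = t x) →
      p1 <:+ q1 ∨ q1 <:+ p1 := by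
  intro p1
  induction p1 using List.reverseRecOn with
  | nil => intro _ _ q1 _ _ _ _ _; exact Or.inl ⟨q1, by simp⟩
  | append_singleton p1' d ih =>
    intro c p2 q1 q2 hp hq hup huq
    rcases List.eq_nil_or_concat q1 with rfl | ⟨q1', e, rfl⟩
    · exact Or.inr ⟨p1' ++ [d], by simp⟩
    · simp only [List.concat_eq_append] at hq huq ⊢
      have hdc : t d = s c :=
        (List.isChain_append.1 hp).2.2 d (by simp [List.getLast?_concat]) c rfl
      have hec : t e = s c :=
        (List.isChain_append.1 hq).2.2 e (by simp [List.getLast?_concat]) c rfl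
      have hd : d ∈ ((p1' ++ [d]) ++ c :: p2).dropLast := by
        rw [List.dropLast_append_of_ne_nil (by simp)]
        simp
      obtain ⟨b0, -, hb0⟩ := hup d hd
      have hed : e = d := by rw [hb0 e (hec.trans hdc.symm), hb0 d rfl]
      rw [hed] at hq huq ⊢
      have h := ih d (c :: p2) q1' (c :: q2)
        (by simpa using hp) (by simpa using hq)
        (by simpa using hup) (by simpa using huq)
      rcases h with ⟨w, hw⟩ | ⟨w, hw⟩
      · exact Or.inl ⟨w, by rw [← List.append_assoc, hw]⟩
      · exact Or.inr ⟨w, by rw [← List.append_assoc, hw]⟩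

theorem merge_phi (s t : A → V) (C : A → Prop) (c : A) (p1 p2 q1 q2 : List A)
    (hp : (p1 ++ c :: p2).Chain' (fun a b => t a = s b))
    (hq : (q1 ++ c :: q2).Chain' (fun a b => t a = s b))
    (hpc : ∀ x ∈ (p1 ++ c :: p2).dropLast, C x)
    (hqc : ∀ x ∈ (q1 ++ c :: q2).dropLast, C x) :
    (q1 ++ c :: p2).Chain' (fun a b => t a = s b) ∧
      ∀ x ∈ (q1 ++ c :: p2).dropLast, C x := by
  constructor
  · unfold List.Chain' at hp hq ⊢
    rw [List.isChain_append] at hp hq ⊢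
    refine ⟨hq.1, hp.2.1, fun x hx y hy => ?_⟩
    obtain rfl : c = y := by simpa using hy
    exact hq.2.2 x hx c rfl
  · intro x hx
    cases p2 with
    | nil =>
      rw [List.dropLast_concat] at hx
      apply hqc
      rw [List.dropLast_append_of_ne_nil (by simp)]
      exact List.mem_append_left _ hx
    | cons d p2' =>
      rw [List.dropLast_append_of_ne_nil (by simp)] at hx
      rcases List.mem_append.1 hx with h | h
      · apply hqc
        rw [List.dropLast_append_of_ne_nil (by simp)]
        exact List.mem_append_left _ h
      · apply hpc
        rw [List.dropLast_append_of_ne_nil (by simp)]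
        exact List.mem_append_right _ h

theorem omega_eq_of_mem (s t : A → V) (ω : A → List A)
    (hspec : ∀ a : A, ω a ∈ Phi s t a ∧ ∀ q ∈ Phi s t a, q.length ≤ (ω a).length)
    {a b : A} (hb : b ∈ ω a) : ω a = ω b := by
  obtain ⟨⟨hpne, hpch⟩, hpa, hpcond⟩ := (hspec a).1
  obtain ⟨⟨hqne, hqch⟩, hqb, hqcond⟩ := (hspec b).1
  have hPab : ω a ∈ Phi s t b := ⟨⟨hpne, hpch⟩, single_infix_of_mem hb, hpcond⟩
  obtain ⟨p1, p2, hp⟩ := List.append_of_mem hb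
  obtain ⟨q1, q2, hq⟩ := List.append_of_mem (mem_of_single_infix hqb)
  have ha : a ∈ p1 ++ b :: p2 := hp ▸ mem_of_single_infix hpa
  rw [hp] at hpch hpcond
  rw [hq] at hqch hqcond
  set C : A → Prop := fun x => (∃! b : A, s b = t x) ∧ (∃! b : A, t b = t x) with hC
  have h1 := merge_phi s t C b p1 p2 q1 q2 hpch hqch hpcond hqcond
  have h2 := merge_phi s t C b q1 q2 p1 p2 hqch hpch hqcond hpcond
  have hr1 : (q1 ++ b :: p2) ∈ Phi s t b :=
    ⟨⟨by simp, h1.1⟩, single_infix_of_mem (by simp), h1.2⟩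
  have hr2 : (p1 ++ b :: q2) ∈ Phi s t b :=
    ⟨⟨by simp, h2.1⟩, single_infix_of_mem (by simp), h2.2⟩
  have l1 : p2.length ≤ q2.length := by
    have h := (hspec b).2 _ hr1
    rw [hq] at h
    simp only [List.length_append, List.length_cons] at h
    omega
  have l2 : p1.length ≤ q1.length := by
    have h := (hspec b).2 _ hr2
    rw [hq] at h
    simp only [List.length_append, List.length_cons] at h
    omega
  have hpre : p2 <+: q2 := by
    rcases prefix_agree s t p2 b p1 q1 q2 hpch hqch
        (fun x hx => (hpcond x hx).1) (fun x hx => (hqcond x hx).1) with h | h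
    · exact h
    · rw [h.eq_of_length (le_antisymm h.length_le l1)]
  have hsuf : p1 <:+ q1 := by
    rcases suffix_agree s t p1 b p2 q1 q2 hpch hqch
        (fun x hx => (hpcond x hx).2) (fun x hx => (hqcond x hx).2) with h | h
    · exact h
    · rw [h.eq_of_length (le_antisymm h.length_le l2)]
  have hab : a ∈ ω b := by
    rw [hq]
    rcases List.mem_append.1 ha with h | h
    · exact List.mem_append_left _ (hsuf.subset h)
    · rcases List.mem_cons.1 h with rfl | h
      · simp
      · exact List.mem_append_right _ (List.mem_cons_of_mem _ (hpre.subset h))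
  have hPba : ω b ∈ Phi s t a := ⟨(hspec b).1.1, single_infix_of_mem hab, (hspec b).1.2.2⟩
  have e1 : (ω a).length ≤ (ω b).length := (hspec b).2 _ hPab
  have e2 : (ω b).length ≤ (ω a).length := (hspec a).2 _ hPba
  rw [hp, hq] at e1 e2
  simp only [List.length_append, List.length_cons] at e1 e2
  have hl1 : p1 = q1 := hsuf.eq_of_length (by omega)
  have hl2 : p2 = q2 := hpre.eq_of_length (by omega)
  rw [hp, hq, hl1, hl2]

theorem radj_step (s t : A → V) (Zi : List A → Prop) (ω : A → List A)
    (hω : OmegaSpec s t ω) {u : List A}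
    (hnj : ∀ a b : A, ∀ x ∈ (ω a).getLast?, ∀ y ∈ (ω b).head?,
      Zi [x, y] → ¬ ([x, y] <:+: u))
    {x y : A} (hxy : t x = s y) (hinf : [x, y] <:+: u) :
    RAdj s t Zi ω x y := by
  by_cases hc : IsCyclicQuiver s t
  · obtain ⟨p, -, -, -, -, hconst⟩ := hω.1 hc
    exact Or.inl ((hconst x).trans (hconst y).symm)
  · have hspec := hω.2 hc
    obtain ⟨⟨hne, hch⟩, hix, hcond⟩ := (hspec x).1
    obtain ⟨p1, p2, hp⟩ := List.append_of_mem (mem_of_single_infix hix)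
    cases p2 with
    | cons d p2' =>
      have hx' : x ∈ (ω x).dropLast := by
        rw [hp, List.dropLast_append_of_ne_nil (by simp)]
        simp
      obtain ⟨b0, -, hb0⟩ := (hcond x hx').1
      have htd : t x = s d := by
        rw [hp] at hch
        exact (List.isChain_cons_cons.1 (List.isChain_append.1 hch).2.1).1
      have hyd : y ∈ ω x := by
        have : y = d := by rw [hb0 y hxy.symm, hb0 d htd.symm]
        rw [hp, this]
        simp
      exact Or.inl (omega_eq_of_mem s t ω hspec hyd)
    | nil =>
      have hxl : x ∈ (ω x).getLast? := by
        rw [hp]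
        simp [List.getLast?_concat]
      obtain ⟨⟨hne', hch'⟩, hiy, hcond'⟩ := (hspec y).1
      obtain ⟨q1, q2, hqd⟩ := List.append_of_mem (mem_of_single_infix hiy)
      rcases List.eq_nil_or_concat q1 with rfl | ⟨q1', e, rfl⟩
      · have hyh : y ∈ (ω y).head? := by rw [hqd]; simp
        have hnz : ¬ Zi [x, y] := fun hz => hnj x y x hxl y hyh hz hinf
        by_cases he : ω x = ω y
        · exact Or.inl he
        · exact Or.inr (Or.inl ⟨he, x, hxl, y, hyh, hxy, hnz⟩)
      · have hte : t e = s y := by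
          rw [hqd] at hch'
          exact (List.isChain_append.1 hch').2.2 e (by simp [List.getLast?_concat]) y rfl
        have he' : e ∈ (ω y).dropLast := by
          rw [hqd, List.dropLast_append_of_ne_nil (by simp)]
          simp
        obtain ⟨b1, -, hb1⟩ := (hcond' e he').2
        have hxe : x ∈ ω y := by
          have : x = e := by rw [hb1 x (hxy.trans hte.symm), hb1 e rfl]
          rw [hqd, this]
          simp
        exact Or.inl (omega_eq_of_mem s t ω hspec hxe).symm

theorem chain_sameComp (s t : A → V) (Zi : List A → Prop) (ω : A → List A)
    (hω : OmegaSpec s t ω) {u : List A} (hu : u.Chain' (fun a b => t a = s b))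
    (hnj : ∀ a b : A, ∀ x ∈ (ω a).getLast?, ∀ y ∈ (ω b).head?,
      Zi [x, y] → ¬ ([x, y] <:+: u)) :
    ∀ (l : List A) (a0 : A), (a0 :: l) <:+ u → ∀ x ∈ a0 :: l, SameComp s t Zi ω a0 x := by
  intro l
  induction l with
  | nil =>
    intro a0 _ x hx
    obtain rfl : x = a0 := by simpa using hx
    exact Relation.ReflTransGen.refl
  | cons y l' ih =>
    intro a0 hsuf x hx
    have hch : (a0 :: y :: l').Chain' (fun a b => t a = s b) := hu.suffix hsuf
    have hxy : t a0 = s y := (List.isChain_cons_cons.1 hch).1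
    have hinf : [a0, y] <:+: u := by
      obtain ⟨w, hw⟩ := hsuf
      exact ⟨w, l', by rw [← hw]; simp⟩
    have hstep : RAdj s t Zi ω a0 y := radj_step s t Zi ω hω hnj hxy hinf
    rcases List.mem_cons.1 hx with rfl | hx'
    · exact Relation.ReflTransGen.refl
    · exact Relation.ReflTransGen.head hstep
        (ih y ((List.suffix_cons a0 (y :: l')).trans hsuf) x hx')

end Stmt5Helpers

/-- if `u` is a non-trivial path such that no junction
`ω_a^{l_a} ω_b^0` lying in `I` divides `u`, then `u` is a path of `Q_N` for exactly
one weakly connected component `N` of `G_{Q,I}`. -/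
theorem stmt_5 [Fintype V] [Fintype A] (s t : A → V) (Zi : List A → Prop)
    (ω : A → List A) (hω : OmegaSpec s t ω)
    (hZ : ZeroClosed Zi) (hadm : Admissible s t Zi)
    (u : List A) (hu : IsPath s t u)
    (hnj : ∀ a b : A, ∀ x ∈ (ω a).getLast?, ∀ y ∈ (ω b).head?,
      Zi [x, y] → ¬ ([x, y] <:+: u)) :
    ∃! N : Set A, IsComp s t Zi ω N ∧ PathIn s t N u := by
  classical
  obtain ⟨hune, huch⟩ := hu
  obtain ⟨a0, l, rfl⟩ : ∃ a0 l, u = a0 :: l := by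
    cases u with
    | nil => exact absurd rfl hune
    | cons a0 l => exact ⟨a0, l, rfl⟩
  have hall : ∀ x ∈ a0 :: l, SameComp s t Zi ω a0 x :=
    chain_sameComp s t Zi ω hω huch hnj l a0 (List.suffix_refl _)
  have hsym : Symmetric (RAdj s t Zi ω) := by
    intro a b h
    rcases h with h | h | h
    · exact Or.inl h.symm
    · exact Or.inr (Or.inr h)
    · exact Or.inr (Or.inl h)
  have hS : Symmetric (SameComp s t Zi ω) := by
    haveI : Std.Symm (RAdj s t Zi ω) := ⟨fun a b h => hsym h⟩; exact fun a b h => (Relation.ReflTransGen.symmetric (r := RAdj s t Zi ω)).symm a b h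
  refine ⟨{b | SameComp s t Zi ω a0 b}, ⟨⟨a0, rfl⟩, ⟨hune, huch⟩, hall⟩, ?_⟩
  rintro N' ⟨⟨a', rfl⟩, -, hmem⟩
  have h0 : SameComp s t Zi ω a' a0 := hmem a0 (List.mem_cons_self)
  ext b
  simp only [Set.mem_setOf_eq]
  exact ⟨fun h => Relation.ReflTransGen.trans (hS h0) h,
    fun h => Relation.ReflTransGen.trans h0 h⟩

end UMPPaper
end

section
/- Let A = kQ/I be a bound quiver algebra with set of maximal paths M. Then M equals the union over all weakly connected components N of G_{Q,I} of the images f_N(M_N), where M_N is the set of maximal paths of A_N = kQ_N/I_N and f_N(m + I_N) = m + I. -/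
namespace UMPPaper

variable {V A : Type}

variable {V A : Type}

def PhiCore (s t : A → V) (p : List A) : Prop :=
  IsPath s t p ∧ ∀ x ∈ p.dropLast, (∃! b : A, s b = t x) ∧ (∃! b : A, t b = t x)

lemma chain_adj {s t : A → V} {p l₁ l₂ : List A} {x y : A}
    (hp : IsPath s t p) (h : p = l₁ ++ x :: y :: l₂) : t x = s y := by
  have : List.Chain' (fun a b => t a = s b) [x, y] :=
    hp.2.infix ⟨l₁, l₂, by simp [h]⟩
  exact (List.isChain_pair (R := fun a b => t a = s b)).1 this

lemma mem_dropLast {p l₁ l₂ : List A} {x y : A}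
    (h : p = l₁ ++ x :: y :: l₂) : x ∈ p.dropLast := by
  subst h
  rw [List.dropLast_append_of_ne_nil (by simp)]
  simp

lemma ext_fwd {s t : A → V} {p q u w u' rest : List A} {d : A}
    (hp : PhiCore s t p) (hq : PhiCore s t q)
    (hP : p = u ++ w) (hQ : q = u' ++ w ++ d :: rest) (hw : w ≠ []) :
    PhiCore s t (p ++ [d]) := by
  obtain ⟨w₀, x, rfl⟩ : ∃ w₀ x, w = w₀ ++ [x] := by
    rcases List.eq_nil_or_concat w with h | ⟨w₀, x, h⟩
    · exact absurd h hw
    · exact ⟨w₀, x, by simp [h, List.concat_eq_append]⟩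
  have hP' : p = (u ++ w₀) ++ [x] := by simp [hP]
  have hQ' : q = (u' ++ w₀) ++ x :: d :: rest := by simp [hQ]
  have hlast : t x = s d := chain_adj hq.1 hQ'
  refine ⟨⟨by simp, ?_⟩, ?_⟩
  · show List.IsChain _ (p ++ [d])
    rw [List.isChain_append]
    refine ⟨hp.1.2, List.isChain_singleton d, ?_⟩
    intro a ha b hb
    simp at hb
    subst hb
    have : p.getLast? = some x := by
      rw [hP', List.getLast?_append]; simp
    rw [this] at ha; simp at ha; subst ha; exact hlast
  · intro z hz
    rw [List.dropLast_concat] at hz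
    rw [hP'] at hz
    rcases List.mem_append.1 hz with h | h
    · apply hp.2
      rw [hP', List.dropLast_concat]; exact h
    · simp at h; subst h
      exact hq.2 _ (mem_dropLast hQ')

lemma ext_bwd {s t : A → V} {p q w v l' v' : List A} {e : A}
    (hp : PhiCore s t p) (hq : PhiCore s t q)
    (hP : p = w ++ v) (hQ : q = l' ++ e :: (w ++ v')) (hw : w ≠ []) :
    PhiCore s t (e :: p) := by
  obtain ⟨x, w₁, rfl⟩ : ∃ x w₁, w = x :: w₁ := by
    cases w with
    | nil => exact absurd rfl hw
    | cons x w₁ => exact ⟨x, w₁, rfl⟩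
  have hQ' : q = l' ++ e :: x :: (w₁ ++ v') := by simp [hQ]
  have hex : t e = s x := chain_adj hq.1 hQ'
  have hpne : p ≠ [] := hp.1.1
  refine ⟨⟨by simp, ?_⟩, ?_⟩
  · show List.IsChain _ (e :: p)
    rw [List.isChain_cons]
    refine ⟨?_, hp.1.2⟩
    intro y hy
    have : p.head? = some x := by rw [hP]; rfl
    rw [this] at hy; simp at hy; subst hy; exact hex
  · intro z hz
    have hdl : (e :: p).dropLast = e :: p.dropLast := by
      rw [show e :: p = [e] ++ p from rfl, List.dropLast_append_of_ne_nil hpne]; rfl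
    rw [hdl] at hz
    rcases hz with _ | hz
    · exact hq.2 e (mem_dropLast hQ')
    · exact hp.2 z (by assumption)

lemma cmp_fwd {s t : A → V} {p q : List A}
    (hp : PhiCore s t p) (hq : PhiCore s t q) :
    ∀ (v u u' v' : List A) (c : A), p = u ++ c :: v → q = u' ++ c :: v' →
      v <+: v' ∨ v' <+: v := by
  intro v
  induction v with
  | nil => intro _ _ _ _ _ _; exact Or.inl (List.nil_prefix)
  | cons d w ih =>
    intro u u' v' c hP hQ
    cases v' with
    | nil => exact Or.inr (List.nil_prefix)
    | cons d' w' =>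
      have hcd : t c = s d := chain_adj hp.1 hP
      have hcd' : t c = s d' := chain_adj hq.1 hQ
      have hc : c ∈ p.dropLast := mem_dropLast hP
      have huniq := (hp.2 c hc).1
      have hdd : d' = d := huniq.unique hcd'.symm hcd.symm
      rw [hdd] at hQ
      have hP2 : p = (u ++ [c]) ++ d :: w := by simp [hP]
      have hQ2 : q = (u' ++ [c]) ++ d :: w' := by simp [hQ]
      rcases ih (u ++ [c]) (u' ++ [c]) w' d hP2 hQ2 with ⟨l, hl⟩ | ⟨l, hl⟩
      · exact Or.inl ⟨l, by simp [← hl, hdd]⟩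
      · exact Or.inr ⟨l, by simp [← hl, hdd]⟩

lemma cmp_bwd {s t : A → V} {p q : List A}
    (hp : PhiCore s t p) (hq : PhiCore s t q) :
    ∀ (u u' v v' : List A) (c : A), p = u ++ c :: v → q = u' ++ c :: v' →
      u <:+ u' ∨ u' <:+ u := by
  intro u
  induction u using List.reverseRecOn with
  | nil => intro _ _ _ _ _ _; exact Or.inl (List.nil_suffix)
  | append_singleton w e ih =>
    intro u' v v' c hP hQ
    rcases List.eq_nil_or_concat u' with rfl | ⟨w', e', rfl⟩
    · exact Or.inr (List.nil_suffix)
    · rw [List.concat_eq_append] at hQ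
      have hP2 : p = w ++ e :: c :: v := by simp [hP]
      have hQ2 : q = w' ++ e' :: c :: v' := by simp [hQ]
      have hec : t e = s c := chain_adj hp.1 hP2
      have hec' : t e' = s c := chain_adj hq.1 hQ2
      have he : e ∈ p.dropLast := mem_dropLast hP2
      have huniq := (hp.2 e he).2
      have hee : e' = e := huniq.unique (by rw [hec', ← hec]) rfl
      rw [hee] at hQ2
      have hP3 : p = w ++ e :: (c :: v) := hP2
      have hQ3 : q = w' ++ e :: (c :: v') := hQ2
      rcases ih w' (c :: v) (c :: v') e hP3 hQ3 with ⟨l, hl⟩ | ⟨l, hl⟩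
      · exact Or.inl ⟨l, by simp [← hl, hee, List.concat_eq_append]⟩
      · exact Or.inr ⟨l, by simp [← hl, hee, List.concat_eq_append]⟩

lemma phiCore_of_phi {s t : A → V} {a : A} {p : List A} (h : p ∈ Phi s t a) :
    PhiCore s t p := ⟨h.1, h.2.2⟩

lemma omega_eq {s t : A → V} {ω : A → List A}
    (hnc : ¬ IsCyclicQuiver s t) (hω : OmegaSpec s t ω) {a b : A}
    (hb : b ∈ ω a) : ω a = ω b := by
  obtain ⟨hpa, hmaxa⟩ := hω.2 hnc a
  obtain ⟨hpb, hmaxb⟩ := hω.2 hnc b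
  have hca : PhiCore s t (ω a) := phiCore_of_phi hpa
  have hcb : PhiCore s t (ω b) := phiCore_of_phi hpb
  obtain ⟨u, v, hP⟩ := List.append_of_mem hb
  obtain ⟨u', v', hQ0⟩ := hpb.2.1
  have hQ : ω b = u' ++ b :: v' := by rw [← hQ0]; simp
  -- v = v'
  have hvv : v = v' := by
    rcases cmp_fwd hca hcb v u u' v' b hP hQ with ⟨l, hl⟩ | ⟨l, hl⟩
    · by_contra hne
      have hlne : l ≠ [] := by rintro rfl; simp at hl; exact hne hl
      obtain ⟨d, rest, rfl⟩ : ∃ d rest, l = d :: rest := by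
        cases l with
        | nil => exact absurd rfl hlne
        | cons d rest => exact ⟨d, rest, rfl⟩
      have hext : PhiCore s t (ω a ++ [d]) :=
        ext_fwd hca hcb (w := b :: v) (u := u) (u' := u') (rest := rest)
          (by simpa using hP) (by rw [hQ, ← hl]; simp) (by simp)
      have hphi : (ω a ++ [d]) ∈ Phi s t a := by
        refine ⟨hext.1, ?_, hext.2⟩
        exact hpa.2.1.trans ⟨[], [d], by simp⟩
      have := hmaxa _ hphi
      simp at this
    · by_contra hne
      have hlne : l ≠ [] := by rintro rfl; simp at hl; exact hne hl.symm
      obtain ⟨d, rest, rfl⟩ : ∃ d rest, l = d :: rest := by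
        cases l with
        | nil => exact absurd rfl hlne
        | cons d rest => exact ⟨d, rest, rfl⟩
      have hext : PhiCore s t (ω b ++ [d]) :=
        ext_fwd hcb hca (w := b :: v') (u := u') (u' := u) (rest := rest)
          (by simpa using hQ) (by rw [hP, ← hl]; simp) (by simp)
      have hphi : (ω b ++ [d]) ∈ Phi s t b := by
        refine ⟨hext.1, ?_, hext.2⟩
        exact ⟨u', v' ++ [d], by rw [hQ]; simp⟩
      have := hmaxb _ hphi
      simp at this
  subst hvv
  -- u = u'
  have huu : u = u' := by
    rcases cmp_bwd hca hcb u u' v v b hP hQ with ⟨l, hl⟩ | ⟨l, hl⟩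
    · by_contra hne
      have hlne : l ≠ [] := by rintro rfl; simp at hl; exact hne hl
      obtain ⟨l₀, e, rfl⟩ : ∃ l₀ e, l = l₀ ++ [e] := by
        rcases List.eq_nil_or_concat l with h | ⟨l₀, e, h⟩
        · exact absurd h hlne
        · exact ⟨l₀, e, by simp [h, List.concat_eq_append]⟩
      have hext : PhiCore s t (e :: ω a) :=
        ext_bwd hca hcb (w := u ++ [b]) (v := v) (v' := v) (l' := l₀)
          (by simp [hP]) (by rw [hQ, ← hl]; simp) (by simp)
      have hphi : (e :: ω a) ∈ Phi s t a := by
        refine ⟨hext.1, ?_, hext.2⟩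
        obtain ⟨s1, t1, hinf⟩ := hpa.2.1
        exact ⟨e :: s1, t1, by rw [← hinf]; simp⟩
      have := hmaxa _ hphi
      simp at this
    · by_contra hne
      have hlne : l ≠ [] := by rintro rfl; simp at hl; exact hne hl.symm
      obtain ⟨l₀, e, rfl⟩ : ∃ l₀ e, l = l₀ ++ [e] := by
        rcases List.eq_nil_or_concat l with h | ⟨l₀, e, h⟩
        · exact absurd h hlne
        · exact ⟨l₀, e, by simp [h, List.concat_eq_append]⟩
      have hext : PhiCore s t (e :: ω b) :=
        ext_bwd hcb hca (w := u' ++ [b]) (v := v) (v' := v) (l' := l₀)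
          (by simp [hQ]) (by rw [hP, ← hl]; simp) (by simp)
      have hphi : (e :: ω b) ∈ Phi s t b := by
        refine ⟨hext.1, ?_, hext.2⟩
        exact ⟨e :: u', v, by rw [hQ]; simp⟩
      have := hmaxb _ hphi
      simp at this
  rw [hP, hQ, huu]

lemma radj_of_junction {s t : A → V} {Zi : List A → Prop} {ω : A → List A}
    (hω : OmegaSpec s t ω) {a b : A} (hts : t a = s b) (hz : ¬ Zi [a, b]) :
    RAdj s t Zi ω a b := by
  by_cases hc : IsCyclicQuiver s t
  · obtain ⟨p, _, _, _, _, hconst⟩ := hω.1 hc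
    exact Or.inl ((hconst a).trans (hconst b).symm)
  · obtain ⟨hpa, _⟩ := hω.2 hc a
    obtain ⟨u, v, hP0⟩ := hpa.2.1
    have hP : ω a = u ++ a :: v := by rw [← hP0]; simp
    cases v with
    | cons d w =>
      -- b is the next arrow in ω a
      have hsd : t a = s d := chain_adj hpa.1 hP
      have ha : a ∈ (ω a).dropLast := mem_dropLast hP
      have huniq := (hpa.2.2 a ha).1
      have hbd : b = d := huniq.unique hts.symm hsd.symm
      have hmem : b ∈ ω a := by rw [hP, hbd]; simp
      exact Or.inl (omega_eq hc hω hmem)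
    | nil =>
      obtain ⟨hpb, _⟩ := hω.2 hc b
      obtain ⟨u', v', hQ0⟩ := hpb.2.1
      have hQ : ω b = u' ++ b :: v' := by rw [← hQ0]; simp
      rcases List.eq_nil_or_concat u' with rfl | ⟨w', e, rfl⟩
      · -- junction edge
        by_cases heq : ω a = ω b
        · exact Or.inl heq
        · refine Or.inr (Or.inl ⟨heq, a, ?_, b, ?_, hts, hz⟩)
          · rw [hP, List.getLast?_append]; simp
          · rw [hQ]; simp
      · rw [List.concat_eq_append] at hQ
        have hQ2 : ω b = w' ++ e :: b :: v' := by simp [hQ]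
        have hte : t e = s b := chain_adj hpb.1 hQ2
        have he : e ∈ (ω b).dropLast := mem_dropLast hQ2
        have huniq := (hpb.2.2 e he).2
        have hae : a = e := huniq.unique (by rw [hts, ← hte]) rfl
        have hmem : a ∈ ω b := by rw [hQ2, hae]; simp
        exact Or.inl (omega_eq hc hω hmem).symm

lemma radj_symm {s t : A → V} {Zi : List A → Prop} {ω : A → List A} :
    Symmetric (RAdj s t Zi ω) := by
  intro a b h
  rcases h with h | h | h
  · exact Or.inl h.symm
  · exact Or.inr (Or.inr h)
  · exact Or.inr (Or.inl h)

lemma samecomp_symm {s t : A → V} {Zi : List A → Prop} {ω : A → List A} {a b : A}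
    (h : SameComp s t Zi ω a b) : SameComp s t Zi ω b a :=
  @Relation.ReflTransGen.symmetric _ _ ⟨radj_symm⟩ |>.symm _ _ h

lemma path_comp {s t : A → V} {Zi : List A → Prop} {ω : A → List A}
    (hω : OmegaSpec s t ω) (hZ : ZeroClosed Zi) :
    ∀ (rest : List A) (c : A), IsPath s t (c :: rest) → ¬ Zi (c :: rest) →
      ∀ x ∈ c :: rest, SameComp s t Zi ω c x := by
  intro rest
  induction rest with
  | nil =>
    intro c _ _ x hx
    simp at hx
    subst hx
    exact Relation.ReflTransGen.refl
  | cons d w ih =>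
    intro c hpath hz x hx
    have hcd : t c = s d := chain_adj hpath (show c :: d :: w = [] ++ c :: d :: w by simp)
    have hzcd : ¬ Zi [c, d] := fun h => hz (hZ _ _ h ⟨[], w, by simp⟩)
    have hadj : RAdj s t Zi ω c d := radj_of_junction hω hcd hzcd
    have hpath' : IsPath s t (d :: w) := ⟨by simp, hpath.2.tail⟩
    have hz' : ¬ Zi (d :: w) := fun h => hz (hZ _ _ h ⟨[c], [], by simp⟩)
    rcases hx with _ | hx
    · exact Relation.ReflTransGen.refl
    · exact (Relation.ReflTransGen.single hadj).trans (ih d hpath' hz' x (by assumption))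

/-- the maximal paths of `A = kQ/I` are exactly the maximal paths of
the component algebras `A_N = kQ_N/I_N`, over all weakly connected components `N`
of `G_{Q,I}`. -/
theorem stmt_6 [Fintype V] [Fintype A] (s t : A → V) (Zi : List A → Prop)
    (ω : A → List A) (hω : OmegaSpec s t ω)
    (hZ : ZeroClosed Zi) (hadm : Admissible s t Zi) :
    ∀ m : List A, MaxPathIn s t Zi Set.univ m ↔
      ∃ N : Set A, IsComp s t Zi ω N ∧ MaxPathIn s t Zi N m := by
  intro m
  constructor
  · rintro ⟨⟨hpath, -⟩, hnz, hR, hL⟩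
    obtain ⟨c, rest, rfl⟩ : ∃ c rest, m = c :: rest := by
      cases m with
      | nil => exact absurd rfl hpath.1
      | cons c rest => exact ⟨c, rest, rfl⟩
    refine ⟨{b | SameComp s t Zi ω c b}, ⟨c, rfl⟩, ⟨⟨hpath, ?_⟩, hnz, ?_, ?_⟩⟩
    · exact path_comp hω hZ rest c hpath hnz
    · intro α _ hj; exact hR α (Set.mem_univ α) hj
    · intro α _ hj; exact hL α (Set.mem_univ α) hj
  · rintro ⟨N, ⟨c, rfl⟩, ⟨⟨hpath, hmem⟩, hnz, hR, hL⟩⟩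
    refine ⟨⟨hpath, fun x _ => Set.mem_univ x⟩, hnz, ?_, ?_⟩
    · rintro α - ⟨x, hx, hts⟩
      by_cases hzz : Zi [x, α]
      · obtain ⟨ys, hys⟩ := List.getLast?_eq_some_iff.1 hx
        exact hZ _ _ hzz ⟨ys, [], by simp [hys]⟩
      · have hradj := radj_of_junction hω hts hzz
        have hxm : x ∈ m := List.mem_of_mem_getLast? hx
        have hα : α ∈ {b | SameComp s t Zi ω c b} :=
          (hmem x hxm).trans (Relation.ReflTransGen.single hradj)
        exact hR α hα ⟨x, hx, hts⟩
    · rintro α - ⟨x, hx, hts⟩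
      by_cases hzz : Zi [α, x]
      · obtain ⟨ys, hys⟩ := List.head?_eq_some_iff.1 hx
        exact hZ _ _ hzz ⟨[], ys, by simp [hys]⟩
      · have hradj := radj_of_junction hω hts hzz
        have hxm : x ∈ m := List.mem_of_mem_head? hx
        have hα : α ∈ {b | SameComp s t Zi ω c b} :=
          (hmem x hxm).trans (Relation.ReflTransGen.single (radj_symm hradj))
        exact hL α hα ⟨x, hx, hts⟩

end UMPPaper
end

section
/- Let A = kQ/I be a special multiserial algebra. Then every weakly connected component N of the ramifications graph G_{Q,I} is either a directed path ω_0 → ω_1 → ⋯ → ω_n or a directed cycle ω_0 → ω_1 → ⋯ → ω_n → ω_0, for some n ≥ 0. In particular, every vertex of G_{Q,I} has in-degree at most 1 and out-degree at most 1. -/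
namespace UMPPaper

variable {V A : Type}

section Aux
variable {X : Type}

lemma prefix_or_prefix (R : X → X → Prop) :
    ∀ (p q : List X), p ≠ [] → q ≠ [] → p.Chain' R → q.Chain' R →
      p.head? = q.head? →
      (∀ x ∈ p.dropLast, ∀ b c, R x b → R x c → b = c) →
      p <+: q ∨ q <+: p := by
  intro p
  induction p with
  | nil => intro q h; exact absurd rfl h
  | cons y p' ih =>
    intro q hp hq hcp hcq hh huniq
    match q, hq with
    | z :: q', _ =>
    have hyz : y = z := by simpa using hh
    subst hyz
    match p', q' with
    | [], q' => exact Or.inl ⟨q', rfl⟩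
    | b :: p'', [] => exact Or.inr ⟨b :: p'', rfl⟩
    | b :: p'', c :: q'' =>
      have hyb : R y b := (List.isChain_cons_cons.mp hcp).1
      have hyc : R y c := (List.isChain_cons_cons.mp hcq).1
      have hymem : y ∈ (y :: b :: p'').dropLast := by simp
      have hbc : b = c := huniq y hymem b c hyb hyc
      subst hbc
      have hrec := ih (b :: q'') (by simp) (by simp) (List.isChain_cons_cons.mp hcp).2
        (List.isChain_cons_cons.mp hcq).2 rfl ?_
      · rcases hrec with h | h
        · exact Or.inl ((List.cons_prefix_cons).mpr ⟨rfl, h⟩)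
        · exact Or.inr ((List.cons_prefix_cons).mpr ⟨rfl, h⟩)
      · intro x hx b' c' hb hc
        refine huniq x ?_ b' c' hb hc
        rw [List.dropLast_cons₂]
        exact List.mem_cons_of_mem _ hx

lemma chain'_mem_tail {R : X → X → Prop} :
    ∀ {L : List X}, L.Chain' R → ∀ x ∈ L.tail, ∃ y ∈ L.dropLast, R y x := by
  intro L
  induction L with
  | nil => intro _ x hx; simp at hx
  | cons a L' ih =>
    intro hch x hx
    simp only [List.tail_cons] at hx
    match L', hx with
    | b :: L'', hx =>
      rcases List.mem_cons.mp hx with rfl | hx'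
      · exact ⟨a, by simp, (List.isChain_cons_cons.mp hch).1⟩
      · obtain ⟨y, hy, hyx⟩ := ih (List.isChain_cons_cons.mp hch).2 x (by simpa using hx')
        exact ⟨y, by simp only [List.dropLast_cons₂, List.mem_cons]; right; exact hy, hyx⟩

lemma suffix_or_suffix (R : X → X → Prop) (p q : List X) (hp : p ≠ []) (hq : q ≠ [])
    (hcp : p.Chain' R) (hcq : q.Chain' R) (hl : p.getLast? = q.getLast?)
    (huniq : ∀ x ∈ p.tail, ∀ b c, R b x → R c x → b = c) :
    p <:+ q ∨ q <:+ p := by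
  have hrev := prefix_or_prefix (flip R) p.reverse q.reverse
    (by simpa using hp) (by simpa using hq)
    (List.isChain_reverse.mpr hcp) (List.isChain_reverse.mpr hcq)
    (by rwa [List.head?_reverse, List.head?_reverse])
    ?_
  · rcases hrev with h | h
    · exact Or.inl (List.reverse_prefix.mp h)
    · exact Or.inr (List.reverse_prefix.mp h)
  · intro x hx b c hb hc
    have hx' : x ∈ p.tail := by
      rw [List.dropLast_reverse] at hx
      simpa using hx
    exact huniq x hx' b c hb hc

end Aux


section Graph
variable {X : Type} [DecidableEq X]

lemma chain'_next {R : X → X → Prop} :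
    ∀ {L : List X}, L.Chain' R → ∀ x ∈ L, x ∈ L.getLast? ∨ ∃ z ∈ L, R x z := by
  intro L
  induction L with
  | nil => intro _ x hx; simp at hx
  | cons a L' ih =>
    intro hch x hx
    match L' with
    | [] => left; simp at hx; simp [hx]
    | b :: L'' =>
      rcases List.mem_cons.mp hx with rfl | hx'
      · exact Or.inr ⟨b, by simp, (List.isChain_cons_cons.mp hch).1⟩
      · rcases ih (List.isChain_cons_cons.mp hch).2 x hx' with h | ⟨z, hz, hxz⟩
        · left; rw [List.getLast?_cons_cons]; exact h
        · exact Or.inr ⟨z, List.mem_cons_of_mem _ hz, hxz⟩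

lemma chain'_pred {R : X → X → Prop} :
    ∀ {L : List X}, L.Chain' R → ∀ x ∈ L, x ∈ L.head? ∨ ∃ z ∈ L, R z x := by
  intro L
  induction L with
  | nil => intro _ x hx; simp at hx
  | cons a L' ih =>
    intro hch x hx
    rcases List.mem_cons.mp hx with rfl | hx'
    · left; simp
    · right
      rcases ih (List.isChain_cons.mp hch).2 x hx' with h | ⟨z, hz, hzx⟩
      · exact ⟨a, by simp, (List.isChain_cons.mp hch).1 x h⟩
      · exact ⟨z, List.mem_cons_of_mem _ hz, hzx⟩

lemma exists_maximal_chain (E : X → X → Prop) (T : Finset X) :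
    ∀ (k : ℕ) (L : List X), L ≠ [] → L.Nodup → L.Chain' E → (∀ x ∈ L, x ∈ T) →
      T.card ≤ L.length + k →
      ∃ L' : List X, L' ≠ [] ∧ L'.Nodup ∧ L'.Chain' E ∧ (∀ x ∈ L', x ∈ T) ∧
        (∀ q ∈ T, (∃ x ∈ L'.getLast?, E x q) → q ∈ L') ∧
        (∀ q ∈ T, (∃ x ∈ L'.head?, E q x) → q ∈ L') := by
  intro k
  induction k with
  | zero =>
    intro L hne hnd hch hsub hcard
    have hcov : ∀ q ∈ T, q ∈ L := by
      intro q hq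
      have hsub' : L.toFinset ⊆ T := fun x hx => hsub x (List.mem_toFinset.mp hx)
      have : L.toFinset = T := Finset.eq_of_subset_of_card_le hsub'
        (by rw [List.toFinset_card_of_nodup hnd]; simpa using hcard)
      rw [← this] at hq
      exact List.mem_toFinset.mp hq
    exact ⟨L, hne, hnd, hch, hsub, fun q hq _ => hcov q hq, fun q hq _ => hcov q hq⟩
  | succ k ih =>
    intro L hne hnd hch hsub hcard
    by_cases h1 : ∀ q ∈ T, (∃ x ∈ L.getLast?, E x q) → q ∈ L
    · by_cases h2 : ∀ q ∈ T, (∃ x ∈ L.head?, E q x) → q ∈ L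
      · exact ⟨L, hne, hnd, hch, hsub, h1, h2⟩
      · push_neg at h2
        obtain ⟨q, hqT, ⟨x, hx, hqx⟩, hqL⟩ := h2
        refine ih (q :: L) (by simp) (by simp [hnd, hqL]) ?_ ?_ ?_
        · refine List.isChain_cons.mpr ⟨fun y hy => ?_, hch⟩
          have hyx : y = x := by
            rw [Option.mem_def.mp hx] at hy
            simpa [eq_comm] using hy
          rwa [hyx]
        · intro y hy
          rcases List.mem_cons.mp hy with rfl | hy'
          · exact hqT
          · exact hsub y hy'
        · simp only [List.length_cons]; omega
    · push_neg at h1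
      obtain ⟨q, hqT, ⟨x, hx, hxq⟩, hqL⟩ := h1
      refine ih (L ++ [q]) (by simp) ?_ ?_ ?_ ?_
      · rw [List.nodup_append]; exact ⟨hnd, by simp, fun a ha b hb => by simp only [List.mem_singleton] at hb; subst hb; exact fun h => hqL (h ▸ ha)⟩
      · refine List.isChain_append.mpr ?_
        refine ⟨hch, by simp, fun y hy z hz => ?_⟩
        have hyx : y = x := by
          rw [Option.mem_def.mp hx] at hy
          simpa [eq_comm] using hy
        have hzq : z = q := by simpa using hz.symm
        rw [hyx, hzq]; exact hxq
      · intro y hy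
        rcases List.mem_append.mp hy with hy' | hy'
        · exact hsub y hy'
        · simp at hy'; rwa [hy']
      · simp only [List.length_append, List.length_singleton]; omega

end Graph

section Graph2
variable {X : Type} [DecidableEq X]

lemma chain_covers (E : X → X → Prop) (T : Finset X)
    (hout : ∀ p ∈ T, ∀ q ∈ T, ∀ r ∈ T, E p q → E p r → q = r)
    (hin : ∀ p ∈ T, ∀ q ∈ T, ∀ r ∈ T, E q p → E r p → q = r)
    (L : List X) (hch : L.Chain' E) (hsub : ∀ x ∈ L, x ∈ T)
    (hmaxR : ∀ q ∈ T, (∃ x ∈ L.getLast?, E x q) → q ∈ L)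
    (hmaxL : ∀ q ∈ T, (∃ x ∈ L.head?, E q x) → q ∈ L)
    (p0 : X) (hp0 : p0 ∈ L) (q : X)
    (hconn : Relation.ReflTransGen (fun x y => y ∈ T ∧ (E x y ∨ E y x)) p0 q) :
    q ∈ L := by
  induction hconn with
  | refl => exact hp0
  | @tail c d h1 h2 ih =>
    have hcL : c ∈ L := ih
    have hcT := hsub c hcL
    obtain ⟨hdT, hcd | hdc⟩ := h2
    · rcases chain'_next hch c hcL with hlast | ⟨z, hzL, hcz⟩
      · exact hmaxR d hdT ⟨c, hlast, hcd⟩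
      · have hdz : d = z := hout c hcT d hdT z (hsub z hzL) hcd hcz
        rw [hdz]; exact hzL
    · rcases chain'_pred hch c hcL with hhead | ⟨z, hzL, hzc⟩
      · exact hmaxL d hdT ⟨c, hhead, hdc⟩
      · have hdz : d = z := hin c hcT d hdT z (hsub z hzL) hdc hzc
        rw [hdz]; exact hzL

lemma comp_classify (E : X → X → Prop) (T : Finset X) (hT : T.Nonempty)
    (hout : ∀ p ∈ T, ∀ q ∈ T, ∀ r ∈ T, E p q → E p r → q = r)
    (hin : ∀ p ∈ T, ∀ q ∈ T, ∀ r ∈ T, E q p → E r p → q = r)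
    (hconn : ∀ p ∈ T, ∀ q ∈ T,
      Relation.ReflTransGen (fun x y => y ∈ T ∧ (E x y ∨ E y x)) p q) :
    ∃ (n : ℕ) (w : Fin (n + 1) → X), Function.Injective w ∧
      (∀ p, p ∈ T ↔ ∃ i, p = w i) ∧
      ((∀ i j : Fin (n + 1), E (w i) (w j) ↔ (i : ℕ) + 1 = (j : ℕ)) ∨
       (∀ i j : Fin (n + 1), E (w i) (w j) ↔ ((i : ℕ) + 1) % (n + 1) = (j : ℕ))) := by
  obtain ⟨p0, hp0⟩ := hT
  obtain ⟨L, hne, hnd, hch, hsub, hmaxR, hmaxL⟩ :=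
    exists_maximal_chain E T T.card [p0] (by simp) (by simp) (List.isChain_singleton p0)
      (by simpa using hp0) (by simp)
  have hcov : ∀ x, x ∈ T ↔ x ∈ L := by
    intro x
    constructor
    · intro hx
      have hheadL : L.head hne ∈ L := List.head_mem hne
      exact chain_covers E T hout hin L hch hsub hmaxR hmaxL _ hheadL x
        (hconn _ (hsub _ hheadL) x hx)
    · exact hsub x
  obtain ⟨n, hlen⟩ : ∃ n, L.length = n + 1 := ⟨L.length - 1, by
    have := List.length_pos_iff.mpr hne; omega⟩
  set w : Fin (n+1) → X := fun i => L.get (Fin.cast hlen.symm i) with hw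
  have winj : Function.Injective w := by
    intro i j hij
    have h2 := (hnd.get_inj_iff).mp hij
    exact Fin.ext (by simpa using congrArg Fin.val h2)
  have memT : ∀ i, w i ∈ T := fun i => (hcov _).mpr (List.get_mem _ _)
  have hget : ∀ (i : Fin (n+1)) (m : ℕ) (hm : m < L.length), (i:ℕ) = m →
      w i = L.get ⟨m, hm⟩ := by
    intro i m hm h
    simp only [hw]
    congr 1
    exact Fin.ext (by simpa using h)
  have hedge : ∀ (i j : Fin (n+1)), (i:ℕ)+1 = (j:ℕ) → E (w i) (w j) := by
    intro i j hij
    have hjlt : (j:ℕ) < n + 1 := j.isLt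
    have hi : w i = L.get ⟨(i:ℕ), by omega⟩ := hget i _ _ rfl
    have hj : w j = L.get ⟨(i:ℕ)+1, by omega⟩ := hget j _ (by omega) hij.symm
    rw [hi, hj]
    exact List.isChain_iff_getElem.mp hch (i:ℕ) (by omega)
  refine ⟨n, w, winj, ?_, ?_⟩
  · intro p
    rw [hcov p, List.mem_iff_get]
    constructor
    · rintro ⟨m, rfl⟩
      exact ⟨Fin.cast hlen m, by rw [hget (Fin.cast hlen m) m m.isLt (by simp)]⟩
    · rintro ⟨i, rfl⟩
      exact ⟨_, rfl⟩
  · by_cases hc : E (w ⟨n, by omega⟩) (w ⟨0, by omega⟩)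
    · right
      intro i j
      constructor
      · intro hEij
        by_cases hi : (i:ℕ) < n
        · have h2 := hedge i ⟨(i:ℕ)+1, by omega⟩ rfl
          have hj := winj (hout _ (memT i) _ (memT j) _ (memT _) hEij h2)
          have hjv : (j:ℕ) = (i:ℕ)+1 := by rw [hj]
          rw [hjv]
          exact Nat.mod_eq_of_lt (by omega)
        · have hi' : (i:ℕ) = n := by omega
          have hii : i = ⟨n, by omega⟩ := Fin.ext hi'
          rw [hii] at hEij
          have hj := winj (hout _ (memT _) _ (memT j) _ (memT _) hEij hc)
          have hjv : (j:ℕ) = 0 := by rw [hj]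
          rw [hjv, hi']
          exact Nat.mod_self (n+1)
      · intro hij
        by_cases hi : (i:ℕ) < n
        · have h1 : (i:ℕ)+1 = (j:ℕ) := by
            rw [← hij]; exact (Nat.mod_eq_of_lt (by omega)).symm
          exact hedge i j h1
        · have hi' : (i:ℕ) = n := by omega
          have hms := Nat.mod_self (n+1)
          have hj0 : (j:ℕ) = 0 := by rw [← hij, hi']; exact hms
          have hii : i = ⟨n, by omega⟩ := Fin.ext hi'
          have hjj : j = ⟨0, by omega⟩ := Fin.ext hj0
          rw [hii, hjj]; exact hc
    · left
      intro i j
      constructor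
      · intro hEij
        by_cases hi : (i:ℕ) < n
        · have h2 := hedge i ⟨(i:ℕ)+1, by omega⟩ rfl
          have hj := winj (hout _ (memT i) _ (memT j) _ (memT _) hEij h2)
          rw [hj]
        · exfalso
          have hi' : (i:ℕ) = n := by omega
          by_cases hj : (j:ℕ) = 0
          · apply hc
            have hii : i = ⟨n, by omega⟩ := Fin.ext hi'
            have hjj : j = ⟨0, by omega⟩ := Fin.ext hj
            rw [hii, hjj] at hEij; exact hEij
          · have hjlt : (j:ℕ) < n + 1 := j.isLt
            have h2 := hedge ⟨(j:ℕ)-1, by omega⟩ j (by simp; omega)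
            have hpred := winj (hin _ (memT j) _ (memT i) _ (memT _) hEij h2)
            have : (i:ℕ) = (j:ℕ)-1 := by rw [hpred]
            omega
      · intro hij
        exact hedge i j hij

end Graph2


section PhiDegree
variable {V A : Type}

lemma phi_unique_head (s t : A → V) {b c : A} {p q : List A}
    (hpb : p ∈ Phi s t b) (hpmax : ∀ r ∈ Phi s t b, r.length ≤ p.length)
    (hqc : q ∈ Phi s t c) (hqmax : ∀ r ∈ Phi s t c, r.length ≤ q.length)
    (hh : p.head? = q.head?) : p = q := by
  obtain ⟨⟨hpne, hpch⟩, hpinf, hpint⟩ := hpb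
  obtain ⟨⟨hqne, hqch⟩, hqinf, hqint⟩ := hqc
  have hcmp := prefix_or_prefix (fun a b => t a = s b) p q hpne hqne hpch hqch hh ?_
  · rcases hcmp with h | h
    · have hq' : q ∈ Phi s t b := ⟨⟨hqne, hqch⟩, hpinf.trans h.isInfix, hqint⟩
      exact h.eq_of_length (le_antisymm h.length_le (hpmax q hq'))
    · have hp' : p ∈ Phi s t c := ⟨⟨hpne, hpch⟩, hqinf.trans h.isInfix, hpint⟩
      exact (h.eq_of_length (le_antisymm h.length_le (hqmax p hp'))).symm
  · intro x hx b' c' hb hc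
    obtain ⟨b0, hb0s, hb0u⟩ := (hpint x hx).1
    exact (hb0u b' hb.symm).trans (hb0u c' hc.symm).symm

lemma phi_unique_last (s t : A → V) {b c : A} {p q : List A}
    (hpb : p ∈ Phi s t b) (hpmax : ∀ r ∈ Phi s t b, r.length ≤ p.length)
    (hqc : q ∈ Phi s t c) (hqmax : ∀ r ∈ Phi s t c, r.length ≤ q.length)
    (hh : p.getLast? = q.getLast?) : p = q := by
  obtain ⟨⟨hpne, hpch⟩, hpinf, hpint⟩ := hpb
  obtain ⟨⟨hqne, hqch⟩, hqinf, hqint⟩ := hqc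
  have hcmp := suffix_or_suffix (fun a b => t a = s b) p q hpne hqne hpch hqch hh ?_
  · rcases hcmp with h | h
    · have hq' : q ∈ Phi s t b := ⟨⟨hqne, hqch⟩, hpinf.trans h.isInfix, hqint⟩
      exact h.eq_of_length (le_antisymm h.length_le (hpmax q hq'))
    · have hp' : p ∈ Phi s t c := ⟨⟨hpne, hpch⟩, hqinf.trans h.isInfix, hpint⟩
      exact (h.eq_of_length (le_antisymm h.length_le (hqmax p hp'))).symm
  · intro x hx b' c' hb hc
    obtain ⟨y, hy, hyx⟩ := chain'_mem_tail hpch x hx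
    obtain ⟨b0, hb0s, hb0u⟩ := (hpint y hy).2
    exact (hb0u b' (hb.trans hyx.symm)).trans (hb0u c' (hc.trans hyx.symm)).symm

lemma out_unique (s t : A → V) (Zi : List A → Prop) (ω : A → List A)
    (hω : OmegaSpec s t ω) (hsm : SpecialMultiserial s t Zi) :
    ∀ a b c : A, REdge s t Zi ω a b → REdge s t Zi ω a c → ω b = ω c := by
  intro a b c h1 h2
  obtain ⟨hne1, x, hx, y, hy, hty, hz⟩ := h1
  obtain ⟨hne2, x', hx', y', hy', hty', hz'⟩ := h2
  by_cases hcyc : IsCyclicQuiver s t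
  · obtain ⟨p, _, _, _, _, hall⟩ := hω.1 hcyc
    rw [hall b, hall c]
  · have hxx : x' = x := by
      rw [Option.mem_def] at hx hx'
      rw [hx] at hx'
      exact Option.some_inj.mp hx'.symm
    subst hxx
    have hyy : y = y' := (hsm x' y y').1 ⟨hty, hz⟩ ⟨hty', hz'⟩
    have hb := hω.2 hcyc b
    have hc := hω.2 hcyc c
    apply phi_unique_head s t hb.1 hb.2 hc.1 hc.2
    rw [Option.mem_def.mp hy, Option.mem_def.mp hy', hyy]

lemma in_unique (s t : A → V) (Zi : List A → Prop) (ω : A → List A)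
    (hω : OmegaSpec s t ω) (hsm : SpecialMultiserial s t Zi) :
    ∀ a b c : A, REdge s t Zi ω b a → REdge s t Zi ω c a → ω b = ω c := by
  intro a b c h1 h2
  obtain ⟨hne1, x, hx, y, hy, hty, hz⟩ := h1
  obtain ⟨hne2, x', hx', y', hy', hty', hz'⟩ := h2
  by_cases hcyc : IsCyclicQuiver s t
  · obtain ⟨p, _, _, _, _, hall⟩ := hω.1 hcyc
    rw [hall b, hall c]
  · have hyy : y' = y := by
      rw [Option.mem_def] at hy hy'
      rw [hy] at hy'
      exact Option.some_inj.mp hy'.symm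
    subst hyy
    have hxx : x = x' := (hsm y' x x').2 ⟨hty, hz⟩ ⟨hty', hz'⟩
    have hb := hω.2 hcyc b
    have hc := hω.2 hcyc c
    apply phi_unique_last s t hb.1 hb.2 hc.1 hc.2
    rw [Option.mem_def.mp hx, Option.mem_def.mp hx', hxx]

end PhiDegree

/-- for a special multiserial algebra, every weakly connected component of
`G_{Q,I}` is a directed path or a directed cycle; in particular every vertex of `G_{Q,I}`
has in-degree and out-degree at most 1. -/
theorem stmt_8 [Fintype V] [Fintype A] (s t : A → V) (Zi : List A → Prop)
    (ω : A → List A) (hω : OmegaSpec s t ω)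
    (hZ : ZeroClosed Zi) (hadm : Admissible s t Zi)
    (hsm : SpecialMultiserial s t Zi) :
    (∀ N : Set A, IsComp s t Zi ω N →
      ∃ (n : ℕ) (w : Fin (n + 1) → List A), Function.Injective w ∧
        (∀ p : List A, (∃ a ∈ N, ω a = p) ↔ ∃ i, p = w i) ∧
        ((∀ i j : Fin (n + 1), REdgeP s t Zi (w i) (w j) ↔ (i : ℕ) + 1 = (j : ℕ)) ∨
         (∀ i j : Fin (n + 1), REdgeP s t Zi (w i) (w j) ↔ ((i : ℕ) + 1) % (n + 1) = (j : ℕ)))) ∧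
    (∀ a b c : A, REdge s t Zi ω a b → REdge s t Zi ω a c → ω b = ω c) ∧
    (∀ a b c : A, REdge s t Zi ω b a → REdge s t Zi ω c a → ω b = ω c) := by
  classical
  have hout := out_unique s t Zi ω hω hsm
  have hin := in_unique s t Zi ω hω hsm
  refine ⟨?_, hout, hin⟩
  intro N hN
  obtain ⟨a0, rfl⟩ := hN
  set T : Finset (List A) :=
    Finset.image ω (Finset.univ.filter (fun a => SameComp s t Zi ω a0 a)) with hT
  have hmemT : ∀ p, p ∈ T ↔ ∃ a ∈ {b | SameComp s t Zi ω a0 b}, ω a = p := by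
    intro p
    simp [hT, Finset.mem_image, Finset.mem_filter, Set.mem_setOf_eq]
  have hTne : T.Nonempty := ⟨ω a0, (hmemT _).mpr ⟨a0, Relation.ReflTransGen.refl, rfl⟩⟩
  have hout' : ∀ p ∈ T, ∀ q ∈ T, ∀ r ∈ T,
      REdgeP s t Zi p q → REdgeP s t Zi p r → q = r := by
    intro p hp q hq r hr h1 h2
    obtain ⟨a, _, rfl⟩ := (hmemT p).mp hp
    obtain ⟨b, _, rfl⟩ := (hmemT q).mp hq
    obtain ⟨c, _, rfl⟩ := (hmemT r).mp hr
    exact hout a b c h1 h2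
  have hin' : ∀ p ∈ T, ∀ q ∈ T, ∀ r ∈ T,
      REdgeP s t Zi q p → REdgeP s t Zi r p → q = r := by
    intro p hp q hq r hr h1 h2
    obtain ⟨a, _, rfl⟩ := (hmemT p).mp hp
    obtain ⟨b, _, rfl⟩ := (hmemT q).mp hq
    obtain ⟨c, _, rfl⟩ := (hmemT r).mp hr
    exact hin a b c h1 h2
  have hsymm : Symmetric (RAdj s t Zi ω) := by
    intro a b h
    rcases h with h | h | h
    exacts [Or.inl h.symm, Or.inr (Or.inr h), Or.inr (Or.inl h)]
  have hconn' : ∀ p ∈ T, ∀ q ∈ T, Relation.ReflTransGen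
      (fun x y => y ∈ T ∧ (REdgeP s t Zi x y ∨ REdgeP s t Zi y x)) p q := by
    intro p hp q hq
    obtain ⟨a, ha, rfl⟩ := (hmemT p).mp hp
    obtain ⟨b, hb, rfl⟩ := (hmemT q).mp hq
    have ha' : SameComp s t Zi ω a0 a := ha
    have hb' : SameComp s t Zi ω a0 b := hb
    have hab : SameComp s t Zi ω a b :=
      ((@Relation.ReflTransGen.symmetric _ (RAdj s t Zi ω) ⟨fun _ _ h => hsymm h⟩).symm _ _ ha').trans hb'
    have key : ∀ b', SameComp s t Zi ω a b' → Relation.ReflTransGen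
        (fun x y => y ∈ T ∧ (REdgeP s t Zi x y ∨ REdgeP s t Zi y x)) (ω a) (ω b') := by
      intro b' h
      induction h with
      | refl => exact Relation.ReflTransGen.refl
      | @tail c d h1 h2 ih =>
        have hdN : SameComp s t Zi ω a0 d := ha'.trans (h1.tail h2)
        have hdT : ω d ∈ T := (hmemT _).mpr ⟨d, hdN, rfl⟩
        rcases h2 with he | he | he
        · rwa [← he]
        · exact ih.tail ⟨hdT, Or.inl he⟩
        · exact ih.tail ⟨hdT, Or.inr he⟩
    exact key b hab
  obtain ⟨n, w, hwi, hwc, hcase⟩ := comp_classify (REdgeP s t Zi) T hTne hout' hin' hconn'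
  exact ⟨n, w, hwi, fun p => (hmemT p).symm.trans (hwc p), hcase⟩


end UMPPaper
end
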